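/- Let v be the harmonic function on the unit disk given by v(r e^{iθ}) = Re ∑_{j=1}^∞ j·r^{2^j}·e^{i 2^j θ}, and set M(r) = sup_{θ∈[0,2π]} |v(r e^{iθ})| for 0 ≤ r < 1. Then there exist constants C > 0 and c > 0 such that M(r) ≤ C·(1 + log(1/(1−r)))² for all r ∈ [0,1), and limsup_{r→1⁻} M(r)/(log(1/(1−r)))² ≥ c. In particular, v belongs to the growth space with weight (1+log x)² but to no growth space with weight g̃ satisfying g̃(x)/(log x)² → 0 as x → ∞. -/

import Mathlib

open Real Filter Finset

private lemma sum_geom_deriv : HasSum (fun k : ℕ => ((k : ℝ) + 1) * (1/2) ^ k) 4 := by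
  have h1 : HasSum (fun k : ℕ => (k : ℝ) * (1/2) ^ k) 2 := by
    have := hasSum_coe_mul_geometric_of_norm_lt_one (r := (1/2 : ℝ))
      (by rw [Real.norm_eq_abs]; rw [abs_of_nonneg] <;> norm_num)
    norm_num at this
    exact this
  have h2 : HasSum (fun k : ℕ => ((1:ℝ)/2) ^ k) 2 := by
    have := hasSum_geometric_of_lt_one (r := (1/2 : ℝ)) (by norm_num) (by norm_num)
    norm_num at this
    exact this
  have := h1.add h2
  norm_num at this
  convert this using 2 with k
  ring

private lemma aux_summable {r : ℝ} (h0 : 0 ≤ r) (h1 : r < 1) :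
    Summable (fun j : ℕ => ((j : ℝ) + 1) * r ^ (2 ^ (j + 1))) := by
  have h2 : Summable (fun n : ℕ => (n : ℝ) * r ^ n) :=
    (hasSum_coe_mul_geometric_of_norm_lt_one
      (by rwa [Real.norm_eq_abs, abs_of_nonneg h0])).summable
  have hs : Summable (fun j : ℕ => ((j : ℝ) + 1) * r ^ (j + 1)) := by
    have h3 := h2.comp_injective (add_left_injective 1)
    apply h3.congr
    intro j
    simp [Function.comp]
  refine hs.of_nonneg_of_le (fun j => by positivity) (fun j => ?_)
  have h4 : r ^ (2 ^ (j + 1)) ≤ r ^ (j + 1) :=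
    pow_le_pow_of_le_one h0 h1.le (Nat.le_of_lt (Nat.lt_two_pow_self))
  exact mul_le_mul_of_nonneg_left h4 (by positivity)

private lemma sum_range_cast (m : ℕ) :
    ∑ j ∈ range m, ((j : ℝ) + 1) = m * (m + 1) / 2 := by
  induction m with
  | zero => simp
  | succ n ih =>
    rw [Finset.sum_range_succ, ih]
    push_cast
    ring

private lemma aux_upper {r : ℝ} (h0 : 0 ≤ r) (h1 : r < 1) :
    ∑' j : ℕ, ((j : ℝ) + 1) * r ^ (2 ^ (j + 1)) ≤ 32 * (1 + Real.log (1 / (1 - r))) ^ 2 := by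
  have ht : 0 < 1 - r := by linarith
  set x : ℝ := 1 / (1 - r) with hxdef
  have hx1 : 1 ≤ x := by
    rw [hxdef, le_div_iff₀ ht]; linarith
  have hL0 : 0 ≤ Real.log x := Real.log_nonneg hx1
  set n : ℕ := ⌈x⌉₊ with hndef
  set N : ℕ := Nat.clog 2 n with hNdef
  have hxn : x ≤ n := Nat.le_ceil x
  have hn2 : (n : ℝ) ≤ 2 ^ N := by exact_mod_cast Nat.le_pow_clog (by norm_num) n
  have hx2N : x ≤ (2:ℝ) ^ N := hxn.trans hn2
  have hq : r ^ (2 ^ N : ℕ) ≤ Real.exp (-1) := by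
    have hr : r ≤ Real.exp (-(1 - r)) := by
      have := Real.add_one_le_exp (-(1 - r)); linarith
    have h2N1 : 1 ≤ (2:ℝ) ^ N * (1 - r) := by
      rw [hxdef] at hx2N
      rw [div_le_iff₀ ht] at hx2N
      linarith
    calc r ^ (2 ^ N : ℕ) ≤ Real.exp (-(1 - r)) ^ (2 ^ N : ℕ) := pow_le_pow_left₀ h0 hr _
      _ = Real.exp (((2 ^ N : ℕ) : ℝ) * (-(1 - r))) := (Real.exp_nat_mul _ _).symm
      _ ≤ Real.exp (-1) := by
          apply Real.exp_le_exp.2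
          push_cast
          nlinarith
  have hsum := aux_summable h0 h1
  have hsplit := Summable.sum_add_tsum_nat_add (f := fun j : ℕ => ((j : ℝ) + 1) * r ^ (2 ^ (j + 1))) N hsum
  have hhead : ∑ i ∈ range N, ((i : ℝ) + 1) * r ^ (2 ^ (i + 1)) ≤ (N : ℝ) * N := by
    calc ∑ i ∈ range N, ((i : ℝ) + 1) * r ^ (2 ^ (i + 1))
        ≤ ∑ _i ∈ range N, (N : ℝ) := by
          apply Finset.sum_le_sum
          intro i hi
          have h2 : r ^ (2 ^ (i + 1)) ≤ 1 := pow_le_one₀ h0 h1.le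
          have h3 : (i : ℝ) + 1 ≤ N := by
            have := Finset.mem_range.1 hi
            exact_mod_cast Nat.succ_le_of_lt this
          nlinarith [pow_nonneg h0 (2 ^ (i + 1))]
      _ = (N : ℝ) * N := by
          rw [Finset.sum_const, Finset.card_range, nsmul_eq_mul]
  have htail : ∑' k : ℕ, (((k + N : ℕ) : ℝ) + 1) * r ^ (2 ^ (k + N + 1)) ≤ (N : ℝ) + 1 := by
    have hterm : ∀ k : ℕ, (((k + N : ℕ) : ℝ) + 1) * r ^ (2 ^ (k + N + 1))
        ≤ (((N : ℝ) + 1) / 4) * (((k : ℝ) + 1) * (1/2) ^ k) := by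
      intro k
      have he1 : r ^ (2 ^ (k + N + 1)) = (r ^ (2 ^ N : ℕ)) ^ (2 ^ (k + 1)) := by
        rw [← pow_mul, ← pow_add]
        ring_nf
      have he2 : (r ^ (2 ^ N : ℕ)) ^ (2 ^ (k + 1)) ≤ Real.exp (-1) ^ (2 ^ (k + 1)) :=
        pow_le_pow_left₀ (pow_nonneg h0 _) hq _
      have hehalf : Real.exp (-1) ≤ 1/2 := by
        rw [Real.exp_neg]
        have h2e : (2 : ℝ) ≤ Real.exp 1 := by
          have := Real.add_one_le_exp 1; linarith
        rw [inv_le_comm₀ (by positivity) (by norm_num)]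
        norm_num
        linarith
      have he3 : Real.exp (-1) ^ (2 ^ (k + 1)) ≤ Real.exp (-1) ^ (k + 2) :=
        pow_le_pow_of_le_one (Real.exp_nonneg _)
          (hehalf.trans (by norm_num)) (by
            have := Nat.lt_two_pow_self (n := k + 1); omega)
      have he4 : Real.exp (-1) ^ (k + 2) ≤ ((1:ℝ)/2) ^ (k + 2) :=
        pow_le_pow_left₀ (Real.exp_nonneg _) hehalf _
      have hcoef : (((k + N : ℕ) : ℝ) + 1) ≤ ((N : ℝ) + 1) * ((k : ℝ) + 1) := by
        push_cast
        nlinarith [Nat.cast_nonneg (α := ℝ) k, Nat.cast_nonneg (α := ℝ) N]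
      have hrpow : r ^ (2 ^ (k + N + 1)) ≤ ((1:ℝ)/2) ^ (k + 2) := by
        rw [he1]; exact he2.trans (he3.trans he4)
      calc (((k + N : ℕ) : ℝ) + 1) * r ^ (2 ^ (k + N + 1))
          ≤ (((N : ℝ) + 1) * ((k : ℝ) + 1)) * ((1:ℝ)/2) ^ (k + 2) := by
            apply mul_le_mul hcoef hrpow (by positivity)
            positivity
        _ = (((N : ℝ) + 1) / 4) * (((k : ℝ) + 1) * (1/2) ^ k) := by
            rw [pow_add]
            ring
    have hg : HasSum (fun k : ℕ => (((N : ℝ) + 1) / 4) * (((k : ℝ) + 1) * (1/2) ^ k))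
        ((N : ℝ) + 1) := by
      have := sum_geom_deriv.mul_left (((N : ℝ) + 1) / 4)
      convert this using 1
      · rfl
      ring
    have hsum' : Summable (fun k : ℕ => (((k + N : ℕ) : ℝ) + 1) * r ^ (2 ^ (k + N + 1))) := by
      have := (summable_nat_add_iff (f := fun j : ℕ => ((j : ℝ) + 1) * r ^ (2 ^ (j + 1))) N).2 hsum
      exact this.congr (fun k => by push_cast; ring_nf)
    calc ∑' k : ℕ, (((k + N : ℕ) : ℝ) + 1) * r ^ (2 ^ (k + N + 1))
        ≤ ∑' k : ℕ, (((N : ℝ) + 1) / 4) * (((k : ℝ) + 1) * (1/2) ^ k) :=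
          Summable.tsum_le_tsum hterm hsum' hg.summable
      _ = (N : ℝ) + 1 := hg.tsum_eq
  have htot : ∑' j : ℕ, ((j : ℝ) + 1) * r ^ (2 ^ (j + 1)) ≤ ((N : ℝ) + 1) ^ 2 := by
    have hsplit' : (∑ i ∈ range N, ((i : ℝ) + 1) * r ^ (2 ^ (i + 1))) +
        ∑' k : ℕ, (((k + N : ℕ) : ℝ) + 1) * r ^ (2 ^ (k + N + 1))
        = ∑' j : ℕ, ((j : ℝ) + 1) * r ^ (2 ^ (j + 1)) := hsplit
    rw [← hsplit']
    nlinarith [htail, hhead, Nat.cast_nonneg (α := ℝ) N]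
  have hNb : (N : ℝ) + 1 ≤ 4 * (1 + Real.log x) := by
    rcases le_or_gt n 1 with h | h
    · have hN0 : N = 0 := by rw [hNdef, Nat.clog_of_right_le_one h]
      rw [hN0]; push_cast; linarith
    · have hNpos : 1 ≤ N := Nat.clog_pos (by norm_num) h
      have h2 : (2:ℝ) ^ (N - 1) < n := by
        exact_mod_cast Nat.pow_pred_clog_lt_self (by norm_num) h
      have h3 : (n : ℝ) < x + 1 := by
        rw [hndef]
        exact Nat.ceil_lt_add_one (by linarith)
      have h4 : (2:ℝ) ^ (N - 1) < 2 * x := by linarith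
      have h5 : ((N : ℝ) - 1) * Real.log 2 < Real.log (2 * x) := by
        have hll := Real.log_lt_log (by positivity) h4
        rw [Real.log_pow] at hll
        have hc : ((N - 1 : ℕ) : ℝ) = (N : ℝ) - 1 := by
          rw [Nat.cast_sub hNpos]; norm_num
        rw [hc] at hll
        exact hll
      have h6 : Real.log (2 * x) = Real.log 2 + Real.log x :=
        Real.log_mul (by norm_num) (by linarith)
      have hl2a := Real.log_two_gt_d9
      have hl2b := Real.log_two_lt_d9
      have hNn : (0:ℝ) ≤ (N : ℝ) := Nat.cast_nonneg N
      have hhint : (N : ℝ) * 0.6931471803 ≤ (N : ℝ) * Real.log 2 :=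
        mul_le_mul_of_nonneg_left hl2a.le hNn
      linarith [hhint, h5, h6, hL0]
  calc ∑' j : ℕ, ((j : ℝ) + 1) * r ^ (2 ^ (j + 1))
      ≤ ((N : ℝ) + 1) ^ 2 := htot
    _ ≤ (4 * (1 + Real.log x)) ^ 2 := by
        apply pow_le_pow_left₀ (by positivity) hNb
    _ ≤ 32 * (1 + Real.log x) ^ 2 := by nlinarith [sq_nonneg (1 + Real.log x)]

private lemma aux_lower {r : ℝ} (h0 : 3/4 ≤ r) (h1 : r < 1) :
    (Real.log (1 / (1 - r))) ^ 2 / 24 ≤ ∑' j : ℕ, ((j : ℝ) + 1) * r ^ (2 ^ (j + 1)) := by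
  have ht : 0 < 1 - r := by linarith
  set x : ℝ := 1 / (1 - r) with hxdef
  have hx4 : 4 ≤ x := by rw [hxdef, le_div_iff₀ ht]; linarith
  have hx0 : 0 < x := by linarith
  have h1r : 1 - r = 1 / x := by rw [hxdef, one_div_one_div]
  set n : ℕ := ⌊x⌋₊ with hndef
  have hn4 : 4 ≤ n := Nat.le_floor (by exact_mod_cast hx4)
  set N : ℕ := Nat.log 2 n with hNdef
  have hN2 : 2 ≤ N := by
    rw [hNdef]
    exact (Nat.le_log_iff_pow_le (by norm_num) (by omega)).2 (by norm_num; omega)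
  have hpow : (2:ℝ) ^ N ≤ x := by
    calc (2:ℝ) ^ N ≤ (n : ℝ) := by exact_mod_cast Nat.pow_log_le_self 2 (by omega)
      _ ≤ x := Nat.floor_le (by linarith)
  have hxlt : x < 2 ^ (N + 1) := by
    have hn1 : n < 2 ^ (N + 1) := Nat.lt_pow_succ_log_self (by norm_num) n
    have hn1' : (n : ℝ) + 1 ≤ (2:ℝ) ^ (N + 1) := by exact_mod_cast hn1
    have := Nat.lt_floor_add_one x
    rw [← hndef] at this
    linarith
  have hterm : ∀ j ∈ range (N - 1), ((j : ℝ) + 1) / 2 ≤ ((j : ℝ) + 1) * r ^ (2 ^ (j + 1)) := by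
    intro j hj
    have hj' : j + 2 ≤ N := by have := Finset.mem_range.1 hj; omega
    have hple : (2:ℝ) ^ (j + 2) ≤ x :=
      le_trans (pow_le_pow_right₀ (by norm_num) hj') hpow
    have hb : (1:ℝ)/2 ≤ r ^ (2 ^ (j + 1)) := by
      have hber := one_add_mul_le_pow (a := r - 1) (by linarith) (2 ^ (j + 1))
      have hcast : ((2 ^ (j + 1) : ℕ) : ℝ) = (2:ℝ) ^ (j + 1) := by push_cast; ring
      rw [hcast] at hber
      have hform : (1:ℝ) + (r - 1) = r := by ring
      rw [hform] at hber
      have hsmall : (2:ℝ) ^ (j + 1) * (1 - r) ≤ 1/2 := by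
        rw [h1r]
        have h2 : (2:ℝ) ^ (j + 1) ≤ x / 2 := by
          have hps : (2:ℝ) ^ (j + 2) = 2 ^ (j + 1) * 2 := by ring
          linarith [hple, hps]
        have h3 : (2:ℝ) ^ (j + 1) * (1 / x) ≤ (x / 2) * (1 / x) :=
          mul_le_mul_of_nonneg_right h2 (by positivity)
        have h4 : (x / 2) * (1 / x) = 1/2 := by field_simp
        linarith
      nlinarith
    have hjpos : (0:ℝ) ≤ (j : ℝ) + 1 := by positivity
    nlinarith
  have hsum := aux_summable (by linarith) h1
  have hpartial : ∑ j ∈ range (N - 1), ((j : ℝ) + 1) * r ^ (2 ^ (j + 1))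
      ≤ ∑' j : ℕ, ((j : ℝ) + 1) * r ^ (2 ^ (j + 1)) :=
    Summable.sum_le_tsum _ (fun j _ => by positivity) hsum
  have hlow : ((N : ℝ) - 1) * (N : ℝ) / 4
      ≤ ∑ j ∈ range (N - 1), ((j : ℝ) + 1) * r ^ (2 ^ (j + 1)) := by
    have hcs : ∑ j ∈ range (N - 1), (((j : ℝ) + 1) / 2) = ((N : ℝ) - 1) * (N : ℝ) / 4 := by
      rw [← Finset.sum_div, sum_range_cast]
      have hc : ((N - 1 : ℕ) : ℝ) = (N : ℝ) - 1 := by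
        rw [Nat.cast_sub (by omega : 1 ≤ N)]; norm_num
      rw [hc]
      ring
    calc ((N : ℝ) - 1) * (N : ℝ) / 4 = ∑ j ∈ range (N - 1), (((j : ℝ) + 1) / 2) := hcs.symm
      _ ≤ _ := Finset.sum_le_sum hterm
  have hL : Real.log x < ((N : ℝ) + 1) * Real.log 2 := by
    have := Real.log_lt_log hx0 hxlt
    rw [Real.log_pow] at this
    push_cast at this
    linarith
  have hL0 : 0 ≤ Real.log x := Real.log_nonneg (by linarith)
  have hl2b := Real.log_two_lt_d9
  have hl2a := Real.log_two_gt_d9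
  have hNr : (2:ℝ) ≤ (N : ℝ) := by exact_mod_cast hN2
  have hLsq : (Real.log x) ^ 2 ≤ ((N : ℝ) + 1) ^ 2 := by
    have h1' : Real.log x ≤ (N : ℝ) + 1 := by nlinarith
    nlinarith
  have hfin : ((N : ℝ) + 1) ^ 2 ≤ 6 * (((N : ℝ) - 1) * (N : ℝ)) := by nlinarith
  calc (Real.log x) ^ 2 / 24 ≤ ((N : ℝ) + 1) ^ 2 / 24 := by linarith
    _ ≤ 6 * (((N : ℝ) - 1) * (N : ℝ)) / 24 := by linarith
    _ = ((N : ℝ) - 1) * (N : ℝ) / 4 := by ring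
    _ ≤ _ := le_trans hlow hpartial

private lemma aux_abs {r θ : ℝ} (h0 : 0 ≤ r) (h1 : r < 1) {s : ℝ}
    (hs : HasSum (fun j : ℕ => ((j : ℝ) + 1) * r ^ (2 ^ (j + 1)) *
      Real.cos ((2 ^ (j + 1) : ℕ) * θ)) s) :
    |s| ≤ ∑' j : ℕ, ((j : ℝ) + 1) * r ^ (2 ^ (j + 1)) := by
  have hg := (aux_summable h0 h1).hasSum
  rw [abs_le]
  constructor
  · rw [neg_le]
    refine hasSum_le (fun j => ?_) hs.neg hg
    have hA : (0:ℝ) ≤ ((j : ℝ) + 1) * r ^ (2 ^ (j + 1)) := by positivity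
    have hc := Real.neg_one_le_cos (((2 ^ (j + 1) : ℕ) : ℝ) * θ)
    nlinarith
  · refine hasSum_le (fun j => ?_) hs hg
    have hA : (0:ℝ) ≤ ((j : ℝ) + 1) * r ^ (2 ^ (j + 1)) := by positivity
    have hc := Real.cos_le_one (((2 ^ (j + 1) : ℕ) : ℝ) * θ)
    nlinarith

theorem gap_series_log_squared_growth (v : ℂ → ℝ)
    (hv : ∀ r θ : ℝ, 0 ≤ r → r < 1 →
      HasSum (fun j : ℕ => ((j : ℝ) + 1) * r ^ (2 ^ (j + 1)) * Real.cos ((2 ^ (j + 1) : ℕ) * θ))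
        (v ((r : ℂ) * Complex.exp (Complex.I * (θ : ℂ))))) :
    (∃ C : ℝ, 0 < C ∧ ∀ z : ℂ, ‖z‖ < 1 →
      |v z| ≤ C * (1 + Real.log (1 / (1 - ‖z‖))) ^ 2) ∧
    (∃ c : ℝ, 0 < c ∧ ∃ᶠ r in nhdsWithin (1 : ℝ) (Set.Iio 1), ∃ θ : ℝ,
      c * (Real.log (1 / (1 - r))) ^ 2 ≤ |v ((r : ℂ) * Complex.exp (Complex.I * (θ : ℂ)))|) ∧
    (∀ gt : ℝ → ℝ,
      Filter.Tendsto (fun x : ℝ => gt x / (Real.log x) ^ 2) Filter.atTop (nhds 0) →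
      ¬ ∃ K : ℝ, ∀ z : ℂ, ‖z‖ < 1 →
          |v z| ≤ K * gt (1 / (1 - ‖z‖))) := by
  -- a helper giving the value at θ = 0
  have hkey : ∀ r : ℝ, 3/4 ≤ r → r < 1 →
      (Real.log (1 / (1 - r))) ^ 2 / 24 ≤ |v ((r : ℂ) * Complex.exp (Complex.I * ((0:ℝ) : ℂ)))| := by
    intro r hr0 hr1
    have hs := hv r 0 (by linarith) hr1
    simp only [mul_zero, Real.cos_zero, mul_one] at hs
    have heq : (∑' j : ℕ, ((j : ℝ) + 1) * r ^ (2 ^ (j + 1)))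
        = v ((r : ℂ) * Complex.exp (Complex.I * ((0:ℝ) : ℂ))) := by
      have := hs.tsum_eq
      simpa using this
    calc (Real.log (1 / (1 - r))) ^ 2 / 24
        ≤ ∑' j : ℕ, ((j : ℝ) + 1) * r ^ (2 ^ (j + 1)) := aux_lower hr0 hr1
      _ = v ((r : ℂ) * Complex.exp (Complex.I * ((0:ℝ) : ℂ))) := heq
      _ ≤ |v ((r : ℂ) * Complex.exp (Complex.I * ((0:ℝ) : ℂ)))| := le_abs_self _
  refine ⟨⟨32, by norm_num, ?_⟩, ⟨1/24, by norm_num, ?_⟩, ?_⟩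
  · -- upper bound
    intro z hz
    have h0 : 0 ≤ ‖z‖ := norm_nonneg z
    have hzeq : ((‖z‖ : ℝ) : ℂ) * Complex.exp (Complex.I * ((z.arg : ℝ) : ℂ)) = z := by
      rw [mul_comm Complex.I]
      exact Complex.norm_mul_exp_arg_mul_I z
    have hs := hv ‖z‖ z.arg h0 hz
    rw [hzeq] at hs
    exact (aux_abs h0 hz hs).trans (aux_upper h0 hz)
  · -- frequently near 1
    have hev : ∀ᶠ r in nhdsWithin (1 : ℝ) (Set.Iio 1), r ∈ Set.Ioo (3/4 : ℝ) 1 :=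
      Ioo_mem_nhdsLT_of_mem (by constructor <;> norm_num)
    refine (hev.mono ?_).frequently
    intro r hr
    refine ⟨0, ?_⟩
    have := hkey r hr.1.le hr.2
    calc (1/24 : ℝ) * (Real.log (1 / (1 - r))) ^ 2
        = (Real.log (1 / (1 - r))) ^ 2 / 24 := by ring
      _ ≤ _ := this
  · -- no smaller growth space
    rintro gt hgt ⟨K, hK⟩
    have key : ∀ x : ℝ, 4 ≤ x → (Real.log x) ^ 2 / 24 ≤ K * gt x := by
      intro x hx
      have hx0 : 0 < x := by linarith
      have hinvpos : 0 < 1/x := by positivity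
      have hinvle : 1/x ≤ 1/4 := by
        rw [div_le_div_iff₀ hx0 (by norm_num)]; linarith
      have hr1 : (1 - 1/x) < 1 := by linarith
      have hr0 : 3/4 ≤ 1 - 1/x := by linarith
      have hxr : 1 / (1 - (1 - 1/x)) = x := by
        rw [show (1:ℝ) - (1 - 1/x) = 1/x by ring, one_div_one_div]
      have hzabs : ‖((↑(1 - 1/x) : ℂ) * Complex.exp (Complex.I * ((0:ℝ) : ℂ)))‖
          = 1 - 1/x := by
        rw [Complex.ofReal_zero, mul_zero, Complex.exp_zero, mul_one, Complex.norm_real, Real.norm_eq_abs,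
          abs_of_nonneg (by linarith : (0:ℝ) ≤ 1 - 1/x)]
      have hub := hK _ (by rw [hzabs]; exact hr1)
      rw [hzabs, hxr] at hub
      have hlow := hkey (1 - 1/x) hr0 hr1
      rw [hxr] at hlow
      exact hlow.trans hub
    have hε : (0:ℝ) < 1/(48*(|K|+1)) := by positivity
    have hev := (Metric.tendsto_nhds.1 hgt) _ hε
    rw [eventually_atTop] at hev
    obtain ⟨x₀, hx₀⟩ := hev
    set x := max x₀ 4 with hxdef
    have hx4 : (4:ℝ) ≤ x := le_max_right _ _
    have hxx := hx₀ x (le_max_left _ _)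
    rw [Real.dist_eq, sub_zero] at hxx
    have hL : 0 < Real.log x := Real.log_pos (by linarith)
    have hL2 : 0 < (Real.log x) ^ 2 := by positivity
    have h1 := key x hx4
    have h2 : |gt x| < (1/(48*(|K|+1))) * (Real.log x) ^ 2 := by
      rw [abs_div, abs_of_nonneg (le_of_lt hL2)] at hxx
      exact (div_lt_iff₀ hL2).1 hxx
    have h3 : K * gt x ≤ |K| * |gt x| := by
      calc K * gt x ≤ |K * gt x| := le_abs_self _
        _ = |K| * |gt x| := abs_mul _ _
    have h4 : |K| * |gt x| ≤ (|K| + 1) * |gt x| := by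
      nlinarith [abs_nonneg (gt x)]
    have h5 : (|K| + 1) * |gt x| < (|K| + 1) * ((1/(48*(|K|+1))) * (Real.log x) ^ 2) :=
      mul_lt_mul_of_pos_left h2 (by positivity)
    have h6 : (|K| + 1) * ((1/(48*(|K|+1))) * (Real.log x) ^ 2) = (Real.log x) ^ 2 / 48 := by
      have hKpos : (0:ℝ) < |K| + 1 := by positivity
      field_simp
    linarith
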